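/- Let a_1,...,a_m be transpositions a_i = (α_i, 2n+1) in S_{2n+1} whose associated equality partition π lies in NC_{1,2}(m), with all the α corresponding to distinct blocks being distinct. Let i_1 < i_2 < ... < i_k be the elements of the non-inner singleton blocks of π. Then the product a_1⋯a_m maps 2n+1 to α_{i_k}, maps α_{i_j} to α_{i_{j-1}} for 2 ≤ j ≤ k, and maps α_{i_1} to 2n+1; in other words, (2n+1, α_{i_k}, ..., α_{i_1}) is a cycle of the product. -/

import Mathlib

namespace JM

/-- A collection of sets is a partition of `Fin m`. -/
def IsPartitionOn {m : ℕ} (π : Set (Set (Fin m))) : Prop :=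
  (∀ B ∈ π, B.Nonempty) ∧ (∀ x : Fin m, ∃ B ∈ π, x ∈ B) ∧
  (∀ B ∈ π, ∀ B' ∈ π, (B ∩ B').Nonempty → B = B')

/-- The partition is non-crossing. -/
def Noncrossing {m : ℕ} (π : Set (Set (Fin m))) : Prop :=
  ∀ B ∈ π, ∀ B' ∈ π, B ≠ B' →
    ¬ ∃ k1 l1 k2 l2 : Fin m, k1 < l1 ∧ l1 < k2 ∧ k2 < l2 ∧
      k1 ∈ B ∧ k2 ∈ B ∧ l1 ∈ B' ∧ l2 ∈ B'

/-- `B` is an inner block of `B'`. -/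
def Inner {m : ℕ} (B B' : Set (Fin m)) : Prop :=
  (∃ p ∈ B', ∀ b ∈ B, p < b) ∧ (∃ q ∈ B', ∀ b ∈ B, b < q)

/-- `B` is a direct inner block of `B''` in π. -/
def DirectInner {m : ℕ} (π : Set (Set (Fin m))) (B B'' : Set (Fin m)) : Prop :=
  Inner B B'' ∧ ¬ ∃ B' ∈ π, Inner B B' ∧ Inner B' B''

/-- Non-crossing partitions with blocks of size 1 or 2, each singleton inner to a 2-block. -/
def NC1lt2 (m : ℕ) : Set (Set (Set (Fin m))) :=
  {π | IsPartitionOn π ∧ Noncrossing π ∧ (∀ B ∈ π, B.ncard = 1 ∨ B.ncard = 2) ∧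
    ∀ B ∈ π, B.ncard = 1 → ∃ B' ∈ π, B'.ncard = 2 ∧ Inner B B'}

/-- Non-crossing partitions all of whose blocks have size at least two. -/
def NCge2 (m : ℕ) : Set (Set (Set (Fin m))) :=
  {π | IsPartitionOn π ∧ Noncrossing π ∧ ∀ B ∈ π, 2 ≤ B.ncard}

/-- The merging map `F`: each 2-block is merged with its direct inner singletons. -/
def Fmap {m : ℕ} (π : Set (Set (Fin m))) : Set (Set (Fin m)) :=
  {C | ∃ B ∈ π, B.ncard = 2 ∧
    C = B ∪ {x | ∃ S ∈ π, S = {x} ∧ DirectInner π S B}}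

/-- The splitting map `G`: from each block of size at least 3, every element except the
minimum and the maximum is placed in its own singleton block. -/
def Gmap {m : ℕ} (π : Set (Set (Fin m))) : Set (Set (Fin m)) :=
  {C | (∃ B ∈ π, B.ncard ≤ 2 ∧ C = B) ∨
    (∃ B ∈ π, 3 ≤ B.ncard ∧ ∃ x ∈ B, (∃ y ∈ B, y < x) ∧ (∃ z ∈ B, x < z) ∧ C = {x}) ∨
    (∃ B ∈ π, 3 ≤ B.ncard ∧ ∃ y ∈ B, ∃ z ∈ B,
      (∀ b ∈ B, y ≤ b) ∧ (∀ b ∈ B, b ≤ z) ∧ C = {y, z})}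

/-- Minimal number of transpositions needed to write σ as a product. -/
noncomputable def permLength {β : Type*} [DecidableEq β] [Fintype β] (σ : Equiv.Perm β) : ℕ :=
  sInf {k | ∃ l : List (Equiv.Perm β), l.length = k ∧ (∀ t ∈ l, t.IsSwap) ∧ l.prod = σ}

/-- The element 2n+1 of {1,…,2n+1}. -/
def jmTop (n : ℕ) : Fin (2*n+1) := Fin.last (2*n)

/-- The tuple of Jucys-Murphy transpositions (αᵢ, 2n+1). -/
def jmTuple {n m : ℕ} (α : Fin m → Fin (2*n+1)) : Fin m → Equiv.Perm (Fin (2*n+1)) :=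
  fun i => Equiv.swap (α i) (jmTop n)

/-- The partition of indices grouping equal values of α. -/
def eqPartition {m : ℕ} {β : Type*} (α : Fin m → β) : Set (Set (Fin m)) :=
  {B | ∃ j : Fin m, B = {i | α i = α j}}

/-- A partition respects a two-coloring. -/
def Respects {m : ℕ} (π : Set (Set (Fin m))) (c : Fin m → Bool) : Prop :=
  ∀ B ∈ π, ∀ i ∈ B, ∀ j ∈ B, c i = c j

/-- Membership in the subgroup S_n × S_n × {e} of S_{2n+1}. -/
def InH (n : ℕ) (σ : Equiv.Perm (Fin (2*n+1))) : Prop :=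
  (∀ x : Fin (2*n+1), (x:ℕ) < n → ((σ x : Fin (2*n+1)) : ℕ) < n) ∧
  (∀ x : Fin (2*n+1), n ≤ (x:ℕ) → (x:ℕ) < 2*n →
    n ≤ ((σ x : Fin (2*n+1)) : ℕ) ∧ ((σ x : Fin (2*n+1)) : ℕ) < 2*n) ∧
  σ (jmTop n) = jmTop n

def e1 (n : ℕ) : Fin n ≃ {x : Fin (2*n+1) // (x:ℕ) < n} where
  toFun i := ⟨⟨i, by omega⟩, i.isLt⟩
  invFun x := ⟨(x.1 : ℕ), x.2⟩
  left_inv i := rfl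
  right_inv x := rfl

def e2 (n : ℕ) : Fin n ≃ {x : Fin (2*n+1) // n ≤ (x:ℕ) ∧ (x:ℕ) < 2*n} where
  toFun i := ⟨⟨n + i, by omega⟩, by simp only [Fin.val_mk]; omega⟩
  invFun x := ⟨(x.1 : ℕ) - n, by have := x.2; omega⟩
  left_inv i := by ext; simp
  right_inv x := by
    rcases x with ⟨x, hx⟩
    exact Subtype.ext (Fin.ext (by simp; omega))

/-- Embed a permutation of `Fin n` as a permutation of `Fin (2n+1)` acting on {1,…,n}. -/
def lift1 {n : ℕ} (τ : Equiv.Perm (Fin n)) : Equiv.Perm (Fin (2*n+1)) :=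
  τ.extendDomain (e1 n)

/-- Embed a permutation of `Fin n` as a permutation of `Fin (2n+1)` acting on {n+1,…,2n}. -/
def lift2 {n : ℕ} (τ : Equiv.Perm (Fin n)) : Equiv.Perm (Fin (2*n+1)) :=
  τ.extendDomain (e2 n)

section Aux
set_option linter.unusedSectionVars false
set_option maxHeartbeats 1000000
variable {β : Type*} [DecidableEq β]


def prodSwaps (N : β) (l : List β) : Equiv.Perm β := (l.map (fun a => Equiv.swap a N)).prod

lemma prodSwaps_cons (N a : β) (l : List β) :
    prodSwaps N (a :: l) = Equiv.swap a N * prodSwaps N l := by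
  simp [prodSwaps]

lemma prodSwaps_append (N : β) (l₁ l₂ : List β) :
    prodSwaps N (l₁ ++ l₂) = prodSwaps N l₁ * prodSwaps N l₂ := by
  simp [prodSwaps]

lemma prodSwaps_fix (N : β) {l : List β} {x : β} (hx : x ∉ l) (hN : x ≠ N) :
    prodSwaps N l x = x := by
  induction l with
  | nil => rfl
  | cons a t ih =>
    simp only [List.mem_cons, not_or] at hx
    rw [prodSwaps_cons, Equiv.Perm.mul_apply, ih hx.2]
    exact Equiv.swap_apply_of_ne_of_ne hx.1 hN

inductive Good (N : β) : List β → List β → Prop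
  | nil : Good N [] []
  | single (a : β) {l s : List β} (ha : a ≠ N) (hal : a ∉ l) (h : Good N l s) :
      Good N (a :: l) (a :: s)
  | pair (a : β) {u v s su : List β} (ha : a ≠ N) (hau : a ∉ u) (hav : a ∉ v)
      (huv : ∀ x ∈ u, x ∉ v) (hu : Good N u su) (hv : Good N v s) :
      Good N (a :: (u ++ a :: v)) s

lemma Good.ne_top {N : β} {l s : List β} (h : Good N l s) : ∀ x ∈ l, x ≠ N := by
  induction h with
  | nil => simp
  | single a ha hal h ih =>
    intro x hx
    rcases List.mem_cons.1 hx with rfl | hx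
    · exact ha
    · exact ih x hx
  | pair a ha hau hav huv hu hv ihu ihv =>
    intro x hx
    rcases List.mem_cons.1 hx with rfl | hx
    · exact ha
    rcases List.mem_append.1 hx with hx | hx
    · exact ihu x hx
    rcases List.mem_cons.1 hx with rfl | hx
    · exact ha
    · exact ihv x hx

lemma Good.subset {N : β} {l s : List β} (h : Good N l s) : ∀ x ∈ s, x ∈ l := by
  induction h with
  | nil => simp
  | single a ha hal h ih =>
    intro x hx
    rcases List.mem_cons.1 hx with rfl | hx
    · exact List.mem_cons_self
    · exact List.mem_cons_of_mem _ (ih x hx)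
  | pair a ha hau hav huv hu hv ihu ihv =>
    intro x hx
    exact List.mem_cons_of_mem _ (List.mem_append.2 (Or.inr (List.mem_cons_of_mem _ (ihv x hx))))

lemma getD_mem {l : List β} {i : ℕ} (h : i < l.length) (N : β) : l.getD i N ∈ l := by
  rw [List.getD_eq_getElem l N h]
  exact List.getElem_mem h

lemma Good.cycle {N : β} {l s : List β} (h : Good N l s) :
    prodSwaps N l N = s.getD (s.length - 1) N ∧
    (∀ i, i + 1 < s.length → prodSwaps N l (s.getD (i+1) N) = s.getD i N) ∧
    (0 < s.length → prodSwaps N l (s.getD 0 N) = N) := by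
  induction h with
  | nil => exact ⟨rfl, by simp, by simp⟩
  | single a ha hal h ih =>
    rename_i l s
    obtain ⟨b1, b2, b3⟩ := ih
    have hsl : ∀ x ∈ s, x ∈ l := h.subset
    have hne : ∀ x ∈ l, x ≠ N := h.ne_top
    have key : ∀ y, y ∈ l → Equiv.swap a N y = y := fun y hy =>
      Equiv.swap_apply_of_ne_of_ne (fun e => hal (e ▸ hy)) (hne y hy)
    refine ⟨?_, ?_, ?_⟩
    · rw [prodSwaps_cons, Equiv.Perm.mul_apply, b1]
      rcases Nat.eq_zero_or_pos s.length with hs | hs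
      · rw [List.length_eq_zero_iff.1 hs]
        simp [Equiv.swap_apply_right]
      · have h1 : s.getD (s.length - 1) N ∈ s := getD_mem (by omega) N
        have : (a :: s).getD ((a :: s).length - 1) N = s.getD (s.length - 1) N := by
          have : (a :: s).length - 1 = (s.length - 1) + 1 := by simp; omega
          rw [this, List.getD_cons_succ]
        rw [this]
        exact key _ (hsl _ h1)
    · intro i hi
      simp only [List.length_cons] at hi
      rw [prodSwaps_cons, Equiv.Perm.mul_apply]
      match i with
      | 0 =>
        rw [List.getD_cons_succ, b3 (by omega), List.getD_cons_zero]
        exact Equiv.swap_apply_right a N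
      | (j+1) =>
        rw [List.getD_cons_succ, List.getD_cons_succ, b2 j (by omega)]
        exact key _ (hsl _ (getD_mem (by omega) N))
    · intro _
      rw [prodSwaps_cons, Equiv.Perm.mul_apply, List.getD_cons_zero,
        prodSwaps_fix N hal ha]
      exact Equiv.swap_apply_left a N
  | pair a ha hau hav huv hu hv ihu ihv =>
    rename_i u v s su
    obtain ⟨b1, b2, b3⟩ := ihv
    have hsv : ∀ x ∈ s, x ∈ v := hv.subset
    have hneu : ∀ x ∈ u, x ≠ N := hu.ne_top
    have hnev : ∀ x ∈ v, x ≠ N := hv.ne_top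
    have hP : ∀ x, prodSwaps N (a :: (u ++ a :: v)) x =
        Equiv.swap a N (prodSwaps N u (Equiv.swap a N (prodSwaps N v x))) := by
      intro x
      rw [prodSwaps_cons, prodSwaps_append, prodSwaps_cons]
      simp [Equiv.Perm.mul_apply]
    have hQ : ∀ y, y ∉ u → y ≠ a →
        Equiv.swap a N (prodSwaps N u (Equiv.swap a N y)) = y := by
      intro y hyu hya
      by_cases hyN : y = N
      · rw [hyN, Equiv.swap_apply_right, prodSwaps_fix N hau ha, Equiv.swap_apply_left]
      · rw [Equiv.swap_apply_of_ne_of_ne hya hyN, prodSwaps_fix N hyu hyN,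
          Equiv.swap_apply_of_ne_of_ne hya hyN]
    have hval : ∀ y, y ∈ v → y ∉ u ∧ y ≠ a := by
      intro y hy
      exact ⟨fun hyu => huv y hyu hy, fun e => hav (e ▸ hy)⟩
    refine ⟨?_, ?_, ?_⟩
    · rw [hP, b1]
      rcases Nat.eq_zero_or_pos s.length with hs | hs
      · rw [List.length_eq_zero_iff.1 hs]
        simp only [List.getD]
        exact hQ N (fun h => hneu N h rfl) (Ne.symm ha)
      · have h1 : s.getD (s.length - 1) N ∈ v := hsv _ (getD_mem (by omega) N)
        exact hQ _ (hval _ h1).1 (hval _ h1).2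
    · intro i hi
      rw [hP, b2 i hi]
      have h1 : s.getD i N ∈ v := hsv _ (getD_mem (by omega) N)
      exact hQ _ (hval _ h1).1 (hval _ h1).2
    · intro hs
      rw [hP, b3 hs]
      exact hQ N (fun h => hneu N h rfl) (Ne.symm ha)



def Free (N : β) (l : List β) (i : ℕ) : Prop :=
  (∀ j < l.length, l.getD j N = l.getD i N → j = i) ∧
  ¬ ∃ p r : ℕ, p < i ∧ i < r ∧ r < l.length ∧ l.getD p N = l.getD r N


lemma mem_getD {l : List β} {x : β} (N : β) (h : x ∈ l) :
    ∃ i, i < l.length ∧ l.getD i N = x := by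
  obtain ⟨i, hi, hx⟩ := List.mem_iff_getElem.1 h
  exact ⟨i, hi, by rw [List.getD_eq_getElem l N hi]; exact hx⟩

lemma exists_split_first {a : β} : ∀ {t : List β}, a ∈ t → ∃ u v, t = u ++ a :: v ∧ a ∉ u := by
  intro t ht
  induction t with
  | nil => simp at ht
  | cons b t ih =>
    by_cases hb : a = b
    · exact ⟨[], t, by rw [hb]; rfl, by simp⟩
    · rcases ih (by rcases List.mem_cons.1 ht with h | h; exact absurd h hb; exact h)
        with ⟨u, v, rfl, hu⟩
      exact ⟨b :: u, v, rfl, by simp only [List.mem_cons, not_or]; exact ⟨hb, hu⟩⟩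

lemma good_of_spec (N : β) : ∀ (n : ℕ) (l : List β), l.length ≤ n → ∀ (idx : List ℕ),
    (∀ x ∈ l, x ≠ N) →
    (∀ i j k, i < j → j < k → k < l.length →
      l.getD i N = l.getD j N → l.getD j N = l.getD k N → False) →
    (∀ p q r t, p < q → q < r → r < t → t < l.length →
      l.getD p N = l.getD r N → l.getD q N = l.getD t N → False) →
    idx.Pairwise (· < ·) →
    (∀ i, i ∈ idx ↔ i < l.length ∧ Free N l i) →
    Good N l (idx.map (fun i => l.getD i N)) := by
  intro n
  induction n with
  | zero =>
    intro l hl idx h1 h2 h3 hs hspec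
    have hl0 : l = [] := List.length_eq_zero_iff.1 (Nat.le_zero.1 hl)
    subst hl0
    have : idx = [] := by
      apply List.eq_nil_iff_forall_not_mem.2
      intro i hi
      have := ((hspec i).1 hi).1
      simp at this
    rw [this]
    exact Good.nil
  | succ n IH =>
    intro l hl idx h1 h2 h3 hs hspec
    match l, hl with
    | [], _ =>
      have : idx = [] := by
        apply List.eq_nil_iff_forall_not_mem.2
        intro i hi
        have := ((hspec i).1 hi).1
        simp at this
      rw [this]
      exact Good.nil
    | a :: t, hl =>
      have hNa : a ≠ N := h1 a List.mem_cons_self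
      by_cases hat : a ∈ t
      · -- pair case
        obtain ⟨u, v, rfl, hau⟩ := exists_split_first hat
        set l := a :: (u ++ a :: v) with hldef
        have hlen : l.length = u.length + v.length + 2 := by
          simp only [hldef, List.length_cons, List.length_append]; omega
        have g0 : l.getD 0 N = a := List.getD_cons_zero
        have gu : ∀ p, p < u.length → l.getD (p+1) N = u.getD p N := by
          intro p hp
          rw [hldef, List.getD_cons_succ]
          exact List.getD_append u (a :: v) N p hp
        have gq : l.getD (u.length + 1) N = a := by
          rw [hldef, List.getD_cons_succ, List.getD_append_right u (a :: v) N u.length le_rfl]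
          simp
        have gv : ∀ r, r < v.length → l.getD (u.length + 2 + r) N = v.getD r N := by
          intro r hr
          rw [show u.length + 2 + r = (u.length + 1 + r) + 1 from by omega, hldef,
            List.getD_cons_succ, List.getD_append_right u (a :: v) N _ (by omega),
            show u.length + 1 + r - u.length = r + 1 from by omega, List.getD_cons_succ]
        have hcase : ∀ j', j' < l.length → j' = 0 ∨ (∃ p, p < u.length ∧ j' = p + 1) ∨
            j' = u.length + 1 ∨ (∃ r, r < v.length ∧ j' = u.length + 2 + r) := by
          intro j' h
          rw [hlen] at h
          rcases Nat.eq_zero_or_pos j' with rfl | h0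
          · exact Or.inl rfl
          rcases Nat.lt_or_ge j' (u.length + 1) with hc1 | hc1
          · exact Or.inr (Or.inl ⟨j' - 1, by omega, by omega⟩)
          rcases Nat.eq_or_lt_of_le hc1 with hc2 | hc2
          · exact Or.inr (Or.inr (Or.inl hc2.symm))
          · exact Or.inr (Or.inr (Or.inr ⟨j' - (u.length + 2), by omega, by omega⟩))
        have hav : a ∉ v := by
          intro hv
          obtain ⟨r, hr, hrv⟩ := mem_getD N hv
          exact h2 0 (u.length + 1) (u.length + 2 + r) (by omega) (by omega)
            (by omega) (by rw [g0, gq]) (by rw [gq, gv r hr, hrv])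
        have huv : ∀ x ∈ u, x ∉ v := by
          intro x hxu hxv
          obtain ⟨p, hp, hpu⟩ := mem_getD N hxu
          obtain ⟨r, hr, hrv⟩ := mem_getD N hxv
          exact h3 0 (p+1) (u.length + 1) (u.length + 2 + r) (by omega) (by omega)
            (by omega) (by omega) (by rw [g0, gq]) (by rw [gu p hp, gv r hr, hpu, hrv])
        have hbig : ∀ i ∈ idx, u.length + 2 ≤ i := by
          intro i hi
          obtain ⟨hil, hfu, hfe⟩ := (hspec i).1 hi
          by_contra hlt
          have hi3 : i = 0 ∨ (1 ≤ i ∧ i ≤ u.length) ∨ i = u.length + 1 := by omega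
          rcases hi3 with rfl | hi2 | rfl
          · have := hfu (u.length + 1) (by omega) (by rw [gq, g0])
            omega
          · exact hfe ⟨0, u.length + 1, by omega, by omega, by omega, by rw [g0, gq]⟩
          · have := hfu 0 (by omega) (by rw [g0, gq])
            omega
        have htrans : ∀ j, j < v.length → (Free N l (u.length + 2 + j) ↔ Free N v j) := by
          intro j hj
          constructor
          · rintro ⟨hu', he'⟩
            constructor
            · intro j2 hj2 hval
              have := hu' (u.length + 2 + j2) (by omega)
                (by rw [gv j2 hj2, gv j hj]; exact hval)
              omega
            · rintro ⟨p, r, hp, hjr, hr, hval⟩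
              exact he' ⟨u.length + 2 + p, u.length + 2 + r, by omega, by omega, by omega,
                by rw [gv p (by omega), gv r hr]; exact hval⟩
          · rintro ⟨hu', he'⟩
            have hxv : v.getD j N ∈ v := getD_mem hj N
            constructor
            · intro j' hj' hval
              rw [gv j hj] at hval
              rcases hcase j' hj' with rfl | ⟨p, hp, rfl⟩ | rfl | ⟨r, hr, rfl⟩
              · rw [g0] at hval
                exact absurd (hval ▸ hxv) hav
              · rw [gu p hp] at hval
                exact absurd hxv (huv _ (hval ▸ getD_mem hp N))
              · rw [gq] at hval
                exact absurd (hval ▸ hxv) hav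
              · have := hu' r hr (by rw [← gv r hr]; exact hval)
                omega
            · rintro ⟨p, r, hp, hjr, hr, hval⟩
              rcases hcase r (by omega) with rfl | ⟨r2, hr2, rfl⟩ | rfl | ⟨r2, hr2, rfl⟩
              · omega
              · omega
              · omega
              · have hx2 : v.getD r2 N ∈ v := getD_mem hr2 N
                rcases hcase p (by omega) with rfl | ⟨p2, hp2, rfl⟩ | rfl | ⟨p2, hp2, rfl⟩
                · rw [g0, gv r2 hr2] at hval
                  exact absurd (hval ▸ hx2) hav
                · rw [gu p2 hp2, gv r2 hr2] at hval
                  exact absurd hx2 (huv _ (hval ▸ getD_mem hp2 N))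
                · rw [gq, gv r2 hr2] at hval
                  exact absurd (hval ▸ hx2) hav
                · rw [gv p2 hp2, gv r2 hr2] at hval
                  exact he' ⟨p2, r2, by omega, by omega, hr2, hval⟩
        set idx' := idx.map (· - (u.length + 2)) with hidx'
        have hmem' : ∀ j, j ∈ idx' ↔ u.length + 2 + j ∈ idx := by
          intro j
          constructor
          · intro hj
            rcases List.mem_map.1 hj with ⟨x, hx, rfl⟩
            have := hbig x hx
            have hxx : u.length + 2 + (x - (u.length + 2)) = x := by omega
            rwa [hxx]
          · intro hj
            exact List.mem_map.2 ⟨u.length + 2 + j, hj, by omega⟩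
        have hspec' : ∀ j, j ∈ idx' ↔ j < v.length ∧ Free N v j := by
          intro j
          rw [hmem' j]
          constructor
          · intro hj
            obtain ⟨hjl, hf⟩ := (hspec _).1 hj
            have hjv : j < v.length := by omega
            exact ⟨hjv, (htrans j hjv).1 hf⟩
          · rintro ⟨hjv, hf⟩
            exact (hspec _).2 ⟨by omega, (htrans j hjv).2 hf⟩
        have hs' : idx'.Pairwise (· < ·) := by
          rw [hidx', List.pairwise_map]
          exact hs.imp_of_mem (fun {x y} hx hy hxy => by
            have := hbig x hx; omega)
        have hmapeq : idx.map (fun i => l.getD i N) = idx'.map (fun i => v.getD i N) := by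
          rw [hidx', List.map_map]
          apply List.map_congr_left
          intro x hx
          have hbx := hbig x hx
          have hxl : x < l.length := ((hspec x).1 hx).1
          show l.getD x N = v.getD (x - (u.length + 2)) N
          rw [show x = u.length + 2 + (x - (u.length + 2)) from by omega,
            gv _ (by omega)]
          congr 1
          omega
        -- hypotheses for v
        have h1v : ∀ x ∈ v, x ≠ N := by
          intro x hx
          exact h1 x (by rw [hldef]; simp [hx])
        have h2v : ∀ i j k, i < j → j < k → k < v.length →
            v.getD i N = v.getD j N → v.getD j N = v.getD k N → False := by
          intro i j k hij hjk hk hv1 hv2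
          exact h2 (u.length+2+i) (u.length+2+j) (u.length+2+k) (by omega) (by omega)
            (by omega) (by rw [gv i (by omega), gv j (by omega)]; exact hv1)
            (by rw [gv j (by omega), gv k hk]; exact hv2)
        have h3v : ∀ p q r t, p < q → q < r → r < t → t < v.length →
            v.getD p N = v.getD r N → v.getD q N = v.getD t N → False := by
          intro p q r t hpq hqr hrt ht hv1 hv2
          exact h3 (u.length+2+p) (u.length+2+q) (u.length+2+r) (u.length+2+t)
            (by omega) (by omega) (by omega) (by omega)
            (by rw [gv p (by omega), gv r (by omega)]; exact hv1)
            (by rw [gv q (by omega), gv t ht]; exact hv2)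
        have hGv : Good N v (idx'.map (fun i => v.getD i N)) :=
          IH v (by omega) idx' h1v h2v h3v hs' hspec'
        -- hypotheses for u
        have h1u : ∀ x ∈ u, x ≠ N := by
          intro x hx
          exact h1 x (by rw [hldef]; simp [hx])
        have h2u : ∀ i j k, i < j → j < k → k < u.length →
            u.getD i N = u.getD j N → u.getD j N = u.getD k N → False := by
          intro i j k hij hjk hk hv1 hv2
          exact h2 (i+1) (j+1) (k+1) (by omega) (by omega) (by omega)
            (by rw [gu i (by omega), gu j (by omega)]; exact hv1)
            (by rw [gu j (by omega), gu k hk]; exact hv2)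
        have h3u : ∀ p q r t, p < q → q < r → r < t → t < u.length →
            u.getD p N = u.getD r N → u.getD q N = u.getD t N → False := by
          intro p q r t hpq hqr hrt ht hv1 hv2
          exact h3 (p+1) (q+1) (r+1) (t+1) (by omega) (by omega) (by omega) (by omega)
            (by rw [gu p (by omega), gu r (by omega)]; exact hv1)
            (by rw [gu q (by omega), gu t ht]; exact hv2)
        classical
        set idxu := (List.range u.length).filter (fun i => decide (Free N u i)) with hidxu
        have hspecu : ∀ i, i ∈ idxu ↔ i < u.length ∧ Free N u i := by
          intro i
          rw [hidxu, List.mem_filter, List.mem_range]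
          simp [decide_eq_true_iff]
        have hsu : idxu.Pairwise (· < ·) := (List.pairwise_lt_range : (List.range u.length).Pairwise (· < ·)).filter _
        have hGu : Good N u (idxu.map (fun i => u.getD i N)) :=
          IH u (by omega) idxu h1u h2u h3u hsu hspecu
        rw [hmapeq]
        exact Good.pair a hNa hau hav huv hGu hGv
      · -- single case
        have hfree0 : 0 ∈ idx := by
          rw [hspec]
          refine ⟨by simp, ?_, ?_⟩
          · intro j hj hjv
            match j with
            | 0 => rfl
            | (j+1) =>
              exfalso
              rw [List.getD_cons_succ, List.getD_cons_zero] at hjv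
              exact hat (hjv ▸ getD_mem (by simpa using hj) N)
          · rintro ⟨p, r, hp, -⟩
            omega
        obtain ⟨idx1, rfl⟩ : ∃ idx1, idx = 0 :: idx1 := by
          cases idx with
          | nil => simp at hfree0
          | cons b idx1 =>
            rcases List.mem_cons.1 hfree0 with h | h
            · exact ⟨idx1, by rw [h]⟩
            · have := (List.pairwise_cons.1 hs).1 0 h
              omega
        have hpos : ∀ x ∈ idx1, 1 ≤ x := by
          intro x hx
          have := (List.pairwise_cons.1 hs).1 x hx
          omega
        set idx' := idx1.map (· - 1) with hidx'
        have hmem' : ∀ j, j ∈ idx' ↔ j + 1 ∈ idx1 := by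
          intro j
          constructor
          · intro hj
            rcases List.mem_map.1 hj with ⟨x, hx, rfl⟩
            have := hpos x hx
            have hxx : x - 1 + 1 = x := by omega
            rwa [hxx]
          · intro hj
            exact List.mem_map.2 ⟨j + 1, hj, by omega⟩
        have htrans : ∀ j, j < t.length → (Free N (a :: t) (j+1) ↔ Free N t j) := by
          intro j hj
          constructor
          · rintro ⟨hu', he'⟩
            constructor
            · intro j2 hj2 hval
              have := hu' (j2+1) (by simp; omega)
                (by rw [List.getD_cons_succ, List.getD_cons_succ]; exact hval)
              omega
            · rintro ⟨p, r, hp, hjr, hr, hval⟩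
              exact he' ⟨p+1, r+1, by omega, by omega, by simp; omega,
                by rw [List.getD_cons_succ, List.getD_cons_succ]; exact hval⟩
          · rintro ⟨hu', he'⟩
            constructor
            · intro j' hj' hval
              rw [List.getD_cons_succ] at hval
              match j', hj' with
              | 0, _ =>
                exfalso
                rw [List.getD_cons_zero] at hval
                exact hat (hval ▸ getD_mem hj N)
              | (j2+1), hj' =>
                rw [List.getD_cons_succ] at hval
                have := hu' j2 (by simp at hj'; omega) hval
                omega
            · rintro ⟨p, r, hp, hjr, hr, hval⟩
              match r, hjr, hr with
              | (r2+1), hjr, hr =>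
                match p with
                | 0 =>
                  rw [List.getD_cons_zero, List.getD_cons_succ] at hval
                  exact hat (hval ▸ getD_mem (show r2 < t.length by simp at hr; omega) N)
                | (p2+1) =>
                  rw [List.getD_cons_succ, List.getD_cons_succ] at hval
                  exact he' ⟨p2, r2, by omega, by omega, by simp at hr; omega, hval⟩
        have hspec' : ∀ j, j ∈ idx' ↔ j < t.length ∧ Free N t j := by
          intro j
          rw [hmem' j]
          constructor
          · intro hj
            obtain ⟨hjl, hf⟩ := (hspec (j+1)).1 (List.mem_cons_of_mem _ hj)
            have hjt : j < t.length := by simp at hjl; omega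
            exact ⟨hjt, (htrans j hjt).1 hf⟩
          · rintro ⟨hjt, hf⟩
            have : j + 1 ∈ 0 :: idx1 :=
              (hspec (j+1)).2 ⟨by simp; omega, (htrans j hjt).2 hf⟩
            rcases List.mem_cons.1 this with h | h
            · omega
            · exact h
        have hs' : idx'.Pairwise (· < ·) := by
          rw [hidx', List.pairwise_map]
          exact ((List.pairwise_cons.1 hs).2).imp_of_mem (fun {x y} hx hy hxy => by
            have := hpos x hx; omega)
        have h1t : ∀ x ∈ t, x ≠ N := fun x hx => h1 x (List.mem_cons_of_mem _ hx)
        have h2t : ∀ i j k, i < j → j < k → k < t.length →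
            t.getD i N = t.getD j N → t.getD j N = t.getD k N → False := by
          intro i j k hij hjk hk hv1 hv2
          exact h2 (i+1) (j+1) (k+1) (by omega) (by omega) (by simp; omega)
            (by rw [List.getD_cons_succ, List.getD_cons_succ]; exact hv1)
            (by rw [List.getD_cons_succ, List.getD_cons_succ]; exact hv2)
        have h3t : ∀ p q r s, p < q → q < r → r < s → s < t.length →
            t.getD p N = t.getD r N → t.getD q N = t.getD s N → False := by
          intro p q r s hpq hqr hrs hsl hv1 hv2
          exact h3 (p+1) (q+1) (r+1) (s+1) (by omega) (by omega) (by omega) (by simp; omega)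
            (by rw [List.getD_cons_succ, List.getD_cons_succ]; exact hv1)
            (by rw [List.getD_cons_succ, List.getD_cons_succ]; exact hv2)
        have hGt : Good N t (idx'.map (fun i => t.getD i N)) :=
          IH t (by simp at hl; omega) idx' h1t h2t h3t hs' hspec'
        have hmapeq : idx1.map (fun i => (a :: t).getD i N) =
            idx'.map (fun i => t.getD i N) := by
          rw [hidx', List.map_map]
          apply List.map_congr_left
          intro x hx
          have h1x := hpos x hx
          show (a :: t).getD x N = t.getD (x - 1) N
          rw [show x = x - 1 + 1 from by omega, List.getD_cons_succ, Nat.add_sub_cancel]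
        rw [List.map_cons, List.getD_cons_zero, hmapeq]
        exact Good.single a hNa hat hGt

end Aux

set_option maxHeartbeats 4000000 in
/-- the cycle of the product through 2n+1 is (2n+1, α_{i_k}, …, α_{i_1})
where i_1 < … < i_k enumerate the non-inner singleton blocks. -/
theorem top_cycle (n m k : ℕ) (α : Fin m → Fin (2*n+1))
    (hα : ∀ i, α i ≠ jmTop n)
    (hnc : Noncrossing (eqPartition α))
    (hsize : ∀ B ∈ eqPartition α, B.ncard = 1 ∨ B.ncard = 2)
    (e : Fin (k+1) → Fin m) (he : StrictMono e)
    (henum : ∀ i : Fin m,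
      ((∀ j, α j = α i → j = i) ∧
        ¬ ∃ p r : Fin m, p < i ∧ i < r ∧ p ≠ r ∧ α p = α r) ↔ ∃ j, e j = i) :
    ((List.ofFn (jmTuple α)).prod) (jmTop n) = α (e (Fin.last k)) ∧
    (∀ j : Fin k, ((List.ofFn (jmTuple α)).prod) (α (e j.succ)) = α (e j.castSucc)) ∧
    ((List.ofFn (jmTuple α)).prod) (α (e 0)) = jmTop n := by
  classical
  set N := jmTop n with hN
  obtain ⟨l, hl⟩ : ∃ l', l' = List.ofFn α := ⟨_, rfl⟩
  have hlen : l.length = m := by rw [hl]; exact List.length_ofFn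
  have hget : ∀ (i : ℕ) (hi : i < m), l.getD i N = α ⟨i, hi⟩ := by
    intro i hi
    rw [List.getD_eq_getElem l N (by rw [hlen]; exact hi)]
    simp [hl]
  have h1 : ∀ x ∈ l, x ≠ N := by
    intro x hx
    rcases List.mem_ofFn.1 (hl ▸ hx : x ∈ List.ofFn α) with ⟨i, rfl⟩
    exact hα i
  have hthree : ∀ (i j k' : Fin m), i ≠ j → i ≠ k' → j ≠ k' → α i = α j → α j = α k' → False := by
    intro i j k' hij hik hjk e1 e2
    have hB : {x : Fin m | α x = α i} ∈ eqPartition α := ⟨i, rfl⟩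
    have hsub : ({i, j, k'} : Set (Fin m)) ⊆ {x : Fin m | α x = α i} := by
      intro x hx
      rcases hx with rfl | rfl | rfl
      · rfl
      · exact e1.symm
      · exact (e1.trans e2).symm
    have h3le : 3 ≤ ({x : Fin m | α x = α i}).ncard := by
      have := Set.ncard_le_ncard hsub (Set.toFinite _)
      rwa [Set.ncard_eq_three.2 ⟨i, j, k', hij, hik, hjk, rfl⟩] at this
    rcases hsize _ hB with h | h <;> omega
  have h2 : ∀ i j k', i < j → j < k' → k' < l.length →
      l.getD i N = l.getD j N → l.getD j N = l.getD k' N → False := by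
    intro i j k' hij hjk hk hv1 hv2
    rw [hlen] at hk
    have hv1' : α ⟨i, by omega⟩ = α ⟨j, by omega⟩ :=
      (hget i (by omega)).symm.trans (hv1.trans (hget j (by omega)))
    have hv2' : α ⟨j, by omega⟩ = α ⟨k', hk⟩ :=
      (hget j (by omega)).symm.trans (hv2.trans (hget k' hk))
    exact hthree ⟨i, by omega⟩ ⟨j, by omega⟩ ⟨k', hk⟩
      (by simp [Fin.ext_iff]; omega) (by simp [Fin.ext_iff]; omega)
      (by simp [Fin.ext_iff]; omega) hv1' hv2'
  have h3' : ∀ (p q r t : Fin m), p < q → q < r → r < t →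
      α p = α r → α q = α t → False := by
    intro p q r t hpq hqr hrt hv1 hv2
    by_cases hBB : ({x | α x = α p} : Set (Fin m)) = {x | α x = α q}
    · have hqp : α q = α p := by
        show q ∈ {x : Fin m | α x = α p}
        rw [hBB]
        exact Set.mem_setOf.2 rfl
      exact hthree p q r (Fin.ne_of_lt hpq) (Fin.ne_of_lt (hpq.trans hqr))
        (Fin.ne_of_lt hqr) hqp.symm (hqp.trans hv1)
    · exact hnc _ ⟨p, rfl⟩ _ ⟨q, rfl⟩ hBB
        ⟨p, q, r, t, hpq, hqr, hrt, rfl, hv1.symm, rfl, hv2.symm⟩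
  have h3 : ∀ p q r t, p < q → q < r → r < t → t < l.length →
      l.getD p N = l.getD r N → l.getD q N = l.getD t N → False := by
    intro p q r t hpq hqr hrt ht hv1 hv2
    rw [hlen] at ht
    exact h3' ⟨p, by omega⟩ ⟨q, by omega⟩ ⟨r, by omega⟩ ⟨t, ht⟩
      (Fin.mk_lt_mk.2 hpq) (Fin.mk_lt_mk.2 hqr) (Fin.mk_lt_mk.2 hrt)
      ((hget p (by omega)).symm.trans (hv1.trans (hget r (by omega))))
      ((hget q (by omega)).symm.trans (hv2.trans (hget t ht)))
  obtain ⟨idx, hidx⟩ : ∃ idx', idx' = List.ofFn (fun j : Fin (k+1) => (e j : ℕ)) := ⟨_, rfl⟩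
  have hs : idx.Pairwise (· < ·) := by
    rw [hidx]
    exact List.pairwise_ofFn.2 (fun i j hij => he hij)
  have hspec : ∀ i, i ∈ idx ↔ i < l.length ∧ Free N l i := by
    intro i
    rw [hidx]
    constructor
    · intro hi
      obtain ⟨j, hj⟩ := List.mem_ofFn.1 hi
      have hj' : (e j : ℕ) = i := hj
      clear hj hi
      subst hj'
      have him : (e j : ℕ) < m := (e j).isLt
      have hfe := (henum (e j)).2 ⟨j, rfl⟩
      refine ⟨by rw [hlen]; exact him, ?_, ?_⟩
      · intro j' hj' hval
        rw [hlen] at hj'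
        have hval' : α ⟨j', hj'⟩ = α ⟨(e j : ℕ), him⟩ :=
          (hget j' hj').symm.trans (hval.trans (hget _ him))
        have := hfe.1 ⟨j', hj'⟩ (by simpa using hval')
        simpa [Fin.ext_iff] using congrArg Fin.val this
      · rintro ⟨p, r, hp, hir, hr, hval⟩
        rw [hlen] at hr
        have hval' : α ⟨p, by omega⟩ = α ⟨r, hr⟩ :=
          (hget p (by omega)).symm.trans (hval.trans (hget r hr))
        exact hfe.2 ⟨⟨p, by omega⟩, ⟨r, hr⟩, by simpa [Fin.lt_def] using hp,
          by simpa [Fin.lt_def] using hir, by simp [Fin.ext_iff]; omega, hval'⟩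
    · rintro ⟨hil, hfu, hfe⟩
      rw [hlen] at hil
      have := (henum ⟨i, hil⟩).1 ⟨?_, ?_⟩
      · rcases this with ⟨j, hj⟩
        exact List.mem_ofFn.2 ⟨j, by simpa using congrArg Fin.val hj⟩
      · intro j hj
        exact Fin.ext (hfu (j : ℕ) (by rw [hlen]; exact j.isLt)
          (by rw [hget _ j.isLt, hget _ hil]; simpa using hj))
      · rintro ⟨p, r, hp, hir, hpr, hval⟩
        exact hfe ⟨(p : ℕ), (r : ℕ), hp, hir, by rw [hlen]; exact r.isLt,
          by rw [hget _ p.isLt, hget _ r.isLt]; simpa using hval⟩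
  have gd : Good N l (idx.map (fun i => l.getD i N)) :=
    good_of_spec N l.length l le_rfl idx h1 h2 h3 hs hspec
  have hseq : idx.map (fun i => l.getD i N) = List.ofFn (fun j => α (e j)) := by
    rw [hidx, List.map_ofFn]
    refine congrArg List.ofFn (funext fun j => ?_)
    show l.getD ((e j : ℕ)) N = α (e j)
    rw [hget _ (e j).isLt]
  rw [hseq] at gd
  obtain ⟨b1, b2, b3⟩ := gd.cycle
  have hP : (List.ofFn (jmTuple α)).prod = prodSwaps N l := by
    rw [prodSwaps, hl, List.map_ofFn]
    rfl
  have hslen : (List.ofFn (fun j => α (e j))).length = k + 1 := List.length_ofFn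
  have hgets : ∀ (i : ℕ) (hi : i < k + 1),
      (List.ofFn (fun j => α (e j))).getD i N = α (e ⟨i, hi⟩) := by
    intro i hi
    rw [List.getD_eq_getElem _ N (by rw [hslen]; exact hi), List.getElem_ofFn]
  refine ⟨?_, ?_, ?_⟩
  · rw [hP, b1, show (List.ofFn fun j => α (e j)).length - 1 = k from by rw [hslen]; omega,
      hgets k (by omega)]
    rfl
  · intro j
    have h2' := b2 (j : ℕ) (by rw [hslen]; omega)
    have h2'' : prodSwaps N l (α (e ⟨(j : ℕ) + 1, by omega⟩)) = α (e ⟨(j : ℕ), by omega⟩) := by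
      rw [← hgets _ (by omega : (j : ℕ) + 1 < k + 1), ← hgets _ (by omega : (j : ℕ) < k + 1)]
      exact h2'
    rw [hP]
    convert h2'' using 3 <;> rfl
  · have h3' := b3 (by rw [hslen]; omega)
    have h3'' : prodSwaps N l (α (e ⟨0, by omega⟩)) = N := by
      rw [← hgets 0 (by omega : 0 < k + 1)]
      exact h3'
    rw [hP]
    convert h3'' using 3 <;> simp [Fin.ext_iff]

end JM
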